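/- (Prasad–Robinson) Let R be a commutative ring and A an m×n matrix over R with D_{k+1}(A) = 0, and let c_{α,β} ∈ R (indexed by strictly increasing α : Fin k → Fin m, β : Fin k → Fin n) satisfy Σ_{α,β} c_{α,β}·μ_{α,β}(A) = 1. Assume moreover that c_{α,β}·c_{α',β'} = c_{α,β'}·c_{α',β} for all α, α', β, β'. Then B := Σ_{α,β} c_{α,β}·Adj_{α,β}(A) satisfies both A·B·A = A and B·A·B = B, i.e. B is a generalized inverse of A. -/

import Mathlib

open Matrix Polynomial
open scoped Classical

/-- The `k`-th determinantal ideal of a matrix. -/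
noncomputable def detIdeal {R : Type*} [CommRing R] {m n : ℕ} (k : ℕ)
    (A : Matrix (Fin m) (Fin n) R) : Ideal R :=
  Ideal.span {x | ∃ (α : Fin k → Fin m) (β : Fin k → Fin n),
    StrictMono α ∧ StrictMono β ∧ x = (A.submatrix α β).det}

/-- `Adj_{α,β}(A) = (I_n)_{·,β} · adjugate(A_{α,β}) · (I_m)_{α,·}`. -/
noncomputable def adjSub {R : Type*} [CommRing R] {m n k : ℕ}
    (A : Matrix (Fin m) (Fin n) R) (α : Fin k → Fin m) (β : Fin k → Fin n) :
    Matrix (Fin n) (Fin m) R :=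
  (1 : Matrix (Fin n) (Fin n) R).submatrix id β * (A.submatrix α β).adjugate *
    (1 : Matrix (Fin m) (Fin m) R).submatrix α id

section Aux

variable {R : Type*} [CommRing R]

private lemma det_map' {S : Type*} [CommRing S] (f : R →+* S) {ν : Type*}
    [DecidableEq ν] [Fintype ν]
    (M : Matrix ν ν R) : (M.map f).det = f M.det := by
  rw [RingHom.map_det]; rfl

private lemma adjugate_map' {S : Type*} [CommRing S] (f : R →+* S) {ν : Type*}
    [DecidableEq ν] [Fintype ν]
    (M : Matrix ν ν R) : (M.map f).adjugate = M.adjugate.map f := by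
  have := f.map_adjugate M
  rw [RingHom.mapMatrix_apply, RingHom.mapMatrix_apply] at this
  exact this.symm

private lemma schur_field {F : Type*} [Field F] {k : ℕ} (M : Matrix (Fin k) (Fin k) F)
    (u : Matrix (Fin k) (Fin 1) F) (v : Matrix (Fin 1) (Fin k) F) (d : Matrix (Fin 1) (Fin 1) F)
    [Invertible M] :
    (Matrix.fromBlocks M u v d).det = d 0 0 * M.det - (v * M.adjugate * u) 0 0 := by
  haveI : Invertible M.det := Matrix.detInvertibleOfInvertible _
  rw [Matrix.det_fromBlocks₁₁, Matrix.det_fin_one, Matrix.invOf_eq, Matrix.sub_apply,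
    Matrix.mul_smul, Matrix.smul_mul, Matrix.smul_apply, smul_eq_mul, mul_sub,
    ← mul_assoc, mul_invOf_self, one_mul]
  ring

/-- Bordered determinant formula over any commutative ring. -/
private lemma schur_adj {k : ℕ}
    (M : Matrix (Fin k) (Fin k) R) (u : Matrix (Fin k) (Fin 1) R)
    (v : Matrix (Fin 1) (Fin k) R) (d : Matrix (Fin 1) (Fin 1) R) :
    (Matrix.fromBlocks M u v d).det
      = d 0 0 * M.det - (v * M.adjugate * u) 0 0 := by
  classical
  let ι := ((Fin k ⊕ Fin 1) × (Fin k ⊕ Fin 1))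
  let S := MvPolynomial ι ℤ
  let GM : Matrix (Fin k) (Fin k) S := fun p q => MvPolynomial.X (Sum.inl p, Sum.inl q)
  let Gu : Matrix (Fin k) (Fin 1) S := fun p q => MvPolynomial.X (Sum.inl p, Sum.inr q)
  let Gv : Matrix (Fin 1) (Fin k) S := fun p q => MvPolynomial.X (Sum.inr p, Sum.inl q)
  let Gd : Matrix (Fin 1) (Fin 1) S := fun p q => MvPolynomial.X (Sum.inr p, Sum.inr q)
  have key : (Matrix.fromBlocks GM Gu Gv Gd).det
      = Gd 0 0 * GM.det - (Gv * GM.adjugate * Gu) 0 0 := by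
    let F := FractionRing S
    have hinj : Function.Injective (algebraMap S F) := IsFractionRing.injective S F
    apply hinj
    have hGMdet : GM.det ≠ 0 := by
      intro h
      let ev : ι → ℤ := fun i =>
        match i with
        | (Sum.inl a, Sum.inl b) => if a = b then (1:ℤ) else 0
        | _ => 0
      have h1 : (MvPolynomial.eval ev : S →+* ℤ) GM.det = 0 := by rw [h]; simp
      rw [RingHom.map_det] at h1
      have h2 : ((MvPolynomial.eval ev : S →+* ℤ).mapMatrix GM)
          = (1 : Matrix (Fin k) (Fin k) ℤ) := by
        ext p q
        change (MvPolynomial.eval ev) (MvPolynomial.X (Sum.inl p, Sum.inl q)) =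
          (1 : Matrix (Fin k) (Fin k) ℤ) p q
        simp [MvPolynomial.eval_X, Matrix.one_apply, ev]
      rw [h2, det_one] at h1
      exact one_ne_zero h1
    set ψ := (algebraMap S F) with hψ
    have hdetF : ((GM.map ψ)).det ≠ 0 := by
      rw [_root_.det_map']
      exact fun h => hGMdet (hinj (by simpa using h))
    haveI : Invertible (GM.map ψ) :=
      Matrix.invertibleOfIsUnitDet _ (isUnit_iff_ne_zero.mpr hdetF)
    have hblocks : (Matrix.fromBlocks GM Gu Gv Gd).map ψ
        = Matrix.fromBlocks (GM.map ψ) (Gu.map ψ) (Gv.map ψ) (Gd.map ψ) :=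
      Matrix.fromBlocks_map _ _ _ _ _
    have hentry : ψ ((Gv * GM.adjugate * Gu) 0 0)
        = ((Gv.map ψ) * (GM.map ψ).adjugate * (Gu.map ψ)) 0 0 := by
      have h3 : (Gv * GM.adjugate * Gu).map ψ
          = (Gv.map ψ) * (GM.map ψ).adjugate * (Gu.map ψ) := by
        rw [Matrix.map_mul, Matrix.map_mul, ← adjugate_map']
      exact congrFun (congrFun h3 0) 0
    have hd : ψ (Gd 0 0) = (Gd.map ψ) 0 0 := rfl
    rw [map_sub, _root_.map_mul, ← det_map' ψ, ← det_map' ψ, hblocks, hentry, hd,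
      schur_field]
  -- specialize to R
  let φ : S →+* R := MvPolynomial.eval₂Hom (Int.castRingHom R)
      (fun i : ι => Matrix.fromBlocks M u v d i.1 i.2)
  have hM : GM.map φ = M := by
    ext p q; exact MvPolynomial.eval₂Hom_X' _ _ _
  have hu : Gu.map φ = u := by
    ext p q; exact MvPolynomial.eval₂Hom_X' _ _ _
  have hv : Gv.map φ = v := by
    ext p q; exact MvPolynomial.eval₂Hom_X' _ _ _
  have hd : Gd.map φ = d := by
    ext p q; exact MvPolynomial.eval₂Hom_X' _ _ _
  have hkey := congrArg φ key
  have hblocks : (Matrix.fromBlocks GM Gu Gv Gd).map φ = Matrix.fromBlocks M u v d := by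
    rw [Matrix.fromBlocks_map, hM, hu, hv, hd]
  have hentry : φ ((Gv * GM.adjugate * Gu) 0 0) = (v * M.adjugate * u) 0 0 := by
    have h3 : (Gv * GM.adjugate * Gu).map φ = v * M.adjugate * u := by
      rw [Matrix.map_mul, Matrix.map_mul, ← adjugate_map', hM, hu, hv]
    exact congrFun (congrFun h3 0) 0
  have hdd : φ (Gd 0 0) = d 0 0 := congrFun (congrFun hd 0) 0
  rw [map_sub, _root_.map_mul, ← det_map' φ, ← det_map' φ, hblocks, hentry, hdd, hM] at hkey
  exact hkey

private lemma strictMono_version {p r : ℕ} (f : Fin r → Fin p) (hf : Function.Injective f) :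
    ∃ (f₀ : Fin r → Fin p) (σ : Equiv.Perm (Fin r)), StrictMono f₀ ∧ f = f₀ ∘ σ := by
  classical
  have hcard : (Finset.univ.image f).card = r := by
    rw [Finset.card_image_of_injective _ hf, Finset.card_univ, Fintype.card_fin]
  let e := (Finset.univ.image f).orderIsoOfFin hcard
  refine ⟨fun i => (e i : Fin p), ?_, ?_, ?_⟩
  · exact Equiv.ofBijective (fun i => e.symm ⟨f i, by simp⟩)
      ((Finite.injective_iff_bijective).mp (fun a b hab => by
        have h2 := congrArg e hab
        simp only [OrderIso.apply_symm_apply] at h2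
        exact hf (congrArg Subtype.val h2)))
  · intro a b hab
    exact Subtype.coe_lt_coe.mpr (e.strictMono hab)
  · funext i
    simp [Equiv.ofBijective]

private lemma minor_mem {m n : ℕ} {r : ℕ}
    (A : Matrix (Fin m) (Fin n) R) (f : Fin r → Fin m) (g : Fin r → Fin n) :
    (A.submatrix f g).det ∈ detIdeal r A := by
  classical
  by_cases hf : Function.Injective f
  · by_cases hg : Function.Injective g
    · obtain ⟨f₀, σ, hf₀, hfc⟩ := strictMono_version f hf
      obtain ⟨g₀, τ, hg₀, hgc⟩ := strictMono_version g hg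
      have h1 : A.submatrix f g = ((A.submatrix f₀ g₀).submatrix σ id).submatrix id τ := by
        rw [Matrix.submatrix_submatrix, Matrix.submatrix_submatrix, hfc, hgc]
        rfl
      rw [h1, Matrix.det_permute', Matrix.det_permute]
      refine Ideal.mul_mem_left _ _ (Ideal.mul_mem_left _ _ ?_)
      exact Ideal.subset_span ⟨f₀, g₀, hf₀, hg₀, rfl⟩
    · rw [Function.not_injective_iff] at hg
      obtain ⟨a, b, hab, hne⟩ := hg
      rw [Matrix.det_zero_of_column_eq hne (fun i => by simp [Matrix.submatrix_apply, hab])]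
      exact Ideal.zero_mem _
  · rw [Function.not_injective_iff] at hf
    obtain ⟨a, b, hab, hne⟩ := hf
    rw [Matrix.det_zero_of_row_eq hne (funext fun j => by simp [Matrix.submatrix_apply, hab])]
    exact Ideal.zero_mem _

private lemma key1 {m n k : ℕ} (A : Matrix (Fin m) (Fin n) R)
    (hA : detIdeal (k+1) A = ⊥) (α : Fin k → Fin m) (β : Fin k → Fin n) :
    A.submatrix id β * (A.submatrix α β).adjugate * A.submatrix α id
      = (A.submatrix α β).det • A := by
  ext i j
  set M := A.submatrix α β with hM
  let u : Matrix (Fin k) (Fin 1) R := fun s _ => A (α s) j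
  let v : Matrix (Fin 1) (Fin k) R := fun _ t => A i (β t)
  let d : Matrix (Fin 1) (Fin 1) R := fun _ _ => A i j
  have h0 : (Matrix.fromBlocks M u v d).det = 0 := by
    have hsub : Matrix.fromBlocks M u v d
        = (A.submatrix (Sum.elim α fun _ => i) (Sum.elim β fun _ => j)) := by
      ext p q
      rcases p with p | p <;> rcases q with q | q <;>
        simp [Matrix.fromBlocks, Matrix.submatrix_apply, u, v, d, hM]
    have hdet : (Matrix.fromBlocks M u v d).det
        = ((A.submatrix (Sum.elim α fun _ => i) (Sum.elim β fun _ => j)).submatrix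
            (finSumFinEquiv (m := k) (n := 1)).symm
            (finSumFinEquiv (m := k) (n := 1)).symm).det := by
      rw [Matrix.det_submatrix_equiv_self, hsub]
    rw [hdet, Matrix.submatrix_submatrix]
    have hm := minor_mem A (Sum.elim α (fun _ => i) ∘ (finSumFinEquiv (m := k) (n := 1)).symm)
      (Sum.elim β (fun _ => j) ∘ (finSumFinEquiv (m := k) (n := 1)).symm)
    rw [hA, Ideal.mem_bot] at hm
    exact hm
  rw [schur_adj] at h0
  have hentry : (A.submatrix id β * (A.submatrix α β).adjugate * A.submatrix α id) i j
      = (v * M.adjugate * u) 0 0 := by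
    simp [Matrix.mul_apply, u, v, hM]
    rfl
  rw [hentry, Matrix.smul_apply, smul_eq_mul]
  have h1 : (v * M.adjugate * u) 0 0 = d 0 0 * M.det := (sub_eq_zero.mp h0).symm
  rw [h1]
  exact mul_comm _ _

private lemma mul_oneSub {p q r : ℕ} (W : Matrix (Fin p) (Fin q) R) (β : Fin r → Fin q) :
    W * (1 : Matrix (Fin q) (Fin q) R).submatrix id β = W.submatrix id β := by
  simpa using Matrix.mul_submatrix_one (Equiv.refl (Fin q)) β W

private lemma oneSub_mul {p q r : ℕ} (W : Matrix (Fin p) (Fin q) R) (α : Fin r → Fin p) :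
    (1 : Matrix (Fin p) (Fin p) R).submatrix α id * W = W.submatrix α id := by
  simpa using Matrix.one_submatrix_mul α (Equiv.refl (Fin p)) W

private lemma key1' {m n k : ℕ} (A : Matrix (Fin m) (Fin n) R)
    (hA : detIdeal (k+1) A = ⊥) (α : Fin k → Fin m) (β : Fin k → Fin n) :
    A * adjSub A α β * A = (A.submatrix α β).det • A := by
  unfold adjSub
  rw [show A * ((1 : Matrix (Fin n) (Fin n) R).submatrix id β * (A.submatrix α β).adjugate *
      (1 : Matrix (Fin m) (Fin m) R).submatrix α id) * A
    = (A * (1 : Matrix (Fin n) (Fin n) R).submatrix id β) * (A.submatrix α β).adjugate *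
      ((1 : Matrix (Fin m) (Fin m) R).submatrix α id * A) by
      simp only [Matrix.mul_assoc]]
  rw [mul_oneSub, oneSub_mul]
  exact key1 A hA α β

private lemma sandwich {m n k : ℕ} (A : Matrix (Fin m) (Fin n) R)
    (α α' : Fin k → Fin m) (β β' : Fin k → Fin n) :
    adjSub A α β * A * adjSub A α' β' =
      (1 : Matrix (Fin n) (Fin n) R).submatrix id β *
        ((A.submatrix α β).adjugate * (A.submatrix α β') * (A.submatrix α' β').adjugate) *
        (1 : Matrix (Fin m) (Fin m) R).submatrix α' id := by
  unfold adjSub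
  have h1 : (1 : Matrix (Fin m) (Fin m) R).submatrix α id * A *
      (1 : Matrix (Fin n) (Fin n) R).submatrix id β' = A.submatrix α β' := by
    rw [oneSub_mul, mul_oneSub, Matrix.submatrix_submatrix]
    rfl
  rw [← h1]
  simp only [Matrix.mul_assoc]

end Aux

/-- Prasad–Robinson. -/
theorem stmt3 {R : Type*} [CommRing R] {m n k : ℕ}
    (A : Matrix (Fin m) (Fin n) R) (hA : detIdeal (k + 1) A = ⊥)
    (c : (Fin k → Fin m) → (Fin k → Fin n) → R)
    (hc : ∑ α ∈ Finset.univ.filter (fun α : Fin k → Fin m => StrictMono α),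
            ∑ β ∈ Finset.univ.filter (fun β : Fin k → Fin n => StrictMono β),
              c α β * (A.submatrix α β).det = 1)
    (hrank1 : ∀ (α α' : Fin k → Fin m) (β β' : Fin k → Fin n),
      c α β * c α' β' = c α β' * c α' β) :
    A * (∑ α ∈ Finset.univ.filter (fun α : Fin k → Fin m => StrictMono α),
          ∑ β ∈ Finset.univ.filter (fun β : Fin k → Fin n => StrictMono β),
            c α β • adjSub A α β) * A = A ∧
    (∑ α ∈ Finset.univ.filter (fun α : Fin k → Fin m => StrictMono α),
          ∑ β ∈ Finset.univ.filter (fun β : Fin k → Fin n => StrictMono β),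
            c α β • adjSub A α β) * A *
      (∑ α ∈ Finset.univ.filter (fun α : Fin k → Fin m => StrictMono α),
          ∑ β ∈ Finset.univ.filter (fun β : Fin k → Fin n => StrictMono β),
            c α β • adjSub A α β) =
      (∑ α ∈ Finset.univ.filter (fun α : Fin k → Fin m => StrictMono α),
          ∑ β ∈ Finset.univ.filter (fun β : Fin k → Fin n => StrictMono β),
            c α β • adjSub A α β) := by
  classical
  set S := Finset.univ.filter (fun α : Fin k → Fin m => StrictMono α) with hSdef
  set T := Finset.univ.filter (fun β : Fin k → Fin n => StrictMono β) with hTdef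
  set B := ∑ α ∈ S, ∑ β ∈ T, c α β • adjSub A α β with hBdef
  -- Goal 1
  have hABA : A * B * A = A := by
    have h1 : A * B * A = ∑ α ∈ S, ∑ β ∈ T, c α β • (A * adjSub A α β * A) := by
      rw [hBdef]
      simp only [Matrix.mul_sum, Matrix.sum_mul, Matrix.smul_mul, Matrix.mul_smul]
    rw [h1]
    have h2 : ∀ α ∈ S, ∀ β ∈ T, c α β • (A * adjSub A α β * A)
        = (c α β * (A.submatrix α β).det) • A := by
      intro α _ β _
      rw [key1' A hA α β, smul_smul]
    calc ∑ α ∈ S, ∑ β ∈ T, c α β • (A * adjSub A α β * A)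
        = ∑ α ∈ S, ∑ β ∈ T, (c α β * (A.submatrix α β).det) • A := by
          refine Finset.sum_congr rfl fun α hα => Finset.sum_congr rfl fun β hβ => h2 α hα β hβ
      _ = (∑ α ∈ S, ∑ β ∈ T, c α β * (A.submatrix α β).det) • A := by
          rw [Finset.sum_smul]
          exact Finset.sum_congr rfl fun α hα => by rw [Finset.sum_smul]
      _ = A := by rw [hc, one_smul]
  refine ⟨hABA, ?_⟩
  -- Goal 2
  have hZ : ∀ α₀ ∈ S, ∀ β₀ ∈ T, (A.submatrix α₀ β₀).det ^ (2*k-1) • (B * A * B)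
      = (A.submatrix α₀ β₀).det ^ (2*k-1) • B := by
    intro α₀ hα₀ β₀ hβ₀
    set μ₀ := (A.submatrix α₀ β₀).det with hμ₀
    set U := A.submatrix id β₀ * (A.submatrix α₀ β₀).adjugate with hU
    set V := A.submatrix α₀ id with hV
    have hUV : U * V = μ₀ • A := key1 A hA α₀ β₀
    have hF3 : ∀ (α : Fin k → Fin m) (β : Fin k → Fin n),
        U.submatrix α id * V.submatrix id β = μ₀ • A.submatrix α β := by
      intro α β
      have h := Matrix.submatrix_mul_equiv U V α (Equiv.refl (Fin k)) β
      rw [hUV] at h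
      refine h.trans ?_
      ext i j
      simp [Matrix.submatrix_apply]
    have hF4 : ∀ (α : Fin k → Fin m) (β : Fin k → Fin n),
        (U.submatrix α id).det * (V.submatrix id β).det
          = μ₀ ^ k * (A.submatrix α β).det := by
      intro α β
      rw [← Matrix.det_mul, hF3, Matrix.det_smul, Fintype.card_fin]
    have hF5 : ∀ (α : Fin k → Fin m) (β : Fin k → Fin n),
        (V.submatrix id β).adjugate * (U.submatrix α id).adjugate
          = μ₀ ^ (k-1) • (A.submatrix α β).adjugate := by
      intro α β
      rw [← Matrix.adjugate_mul_distrib, hF3, Matrix.adjugate_smul, Fintype.card_fin]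
    have hF6 : ∀ (α α' : Fin k → Fin m) (β β' : Fin k → Fin n),
        μ₀ ^ (2*k-1) • ((A.submatrix α β).adjugate * (A.submatrix α β') *
            (A.submatrix α' β').adjugate)
          = (μ₀ ^ (2*k-1) * (A.submatrix α β').det) • (A.submatrix α' β).adjugate := by
      intro α α' β β'
      rcases Nat.eq_zero_or_pos k with hk | hk
      · subst hk
        ext i j
        exact i.elim0
      · have hXYZ : (μ₀^(k-1) • (A.submatrix α β).adjugate) * (μ₀ • A.submatrix α β') *
            (μ₀^(k-1) • (A.submatrix α' β').adjugate)
            = μ₀ ^ (2*k-1) • ((A.submatrix α β).adjugate * (A.submatrix α β') *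
                (A.submatrix α' β').adjugate) := by
          simp only [Matrix.smul_mul, Matrix.mul_smul, smul_smul]
          congr 1
          rw [← pow_succ', ← pow_add]
          congr 1
          omega
        rw [← hXYZ, ← hF5 α β, ← hF3 α β', ← hF5 α' β']
        have hassoc : (V.submatrix id β).adjugate * (U.submatrix α id).adjugate *
            (U.submatrix α id * V.submatrix id β') *
            ((V.submatrix id β').adjugate * (U.submatrix α' id).adjugate)
            = (V.submatrix id β).adjugate *
              (((U.submatrix α id).adjugate * U.submatrix α id) *
               (V.submatrix id β' * (V.submatrix id β').adjugate)) *
              (U.submatrix α' id).adjugate := by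
          simp only [Matrix.mul_assoc]
        rw [hassoc, Matrix.adjugate_mul, Matrix.mul_adjugate]
        have hmid : ((U.submatrix α id).det • (1 : Matrix (Fin k) (Fin k) R)) *
            ((V.submatrix id β').det • (1 : Matrix (Fin k) (Fin k) R))
            = ((U.submatrix α id).det * (V.submatrix id β').det) •
                (1 : Matrix (Fin k) (Fin k) R) := by
          rw [Matrix.smul_mul, Matrix.mul_smul, smul_smul, mul_one]
        rw [hmid, hF4 α β']
        rw [Matrix.mul_smul, Matrix.smul_mul, Matrix.mul_one]
        rw [hF5 α' β, smul_smul]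
        congr 1
        rw [mul_right_comm, ← pow_add]
        congr 2
        omega
    -- pointwise congruence for the sandwich
    have hP : ∀ (α α' : Fin k → Fin m) (β β' : Fin k → Fin n),
        μ₀ ^ (2*k-1) • (adjSub A α β * A * adjSub A α' β')
          = (μ₀ ^ (2*k-1) * (A.submatrix α β').det) • adjSub A α' β := by
      intro α α' β β'
      rw [sandwich]
      have h1 : μ₀ ^ (2*k-1) • ((1 : Matrix (Fin n) (Fin n) R).submatrix id β *
          ((A.submatrix α β).adjugate * (A.submatrix α β') * (A.submatrix α' β').adjugate) *
          (1 : Matrix (Fin m) (Fin m) R).submatrix α' id)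
          = (1 : Matrix (Fin n) (Fin n) R).submatrix id β *
            (μ₀ ^ (2*k-1) • ((A.submatrix α β).adjugate * (A.submatrix α β') *
              (A.submatrix α' β').adjugate)) *
            (1 : Matrix (Fin m) (Fin m) R).submatrix α' id := by
        simp only [Matrix.smul_mul, Matrix.mul_smul]
      rw [h1, hF6 α α' β β']
      simp only [Matrix.smul_mul, Matrix.mul_smul]
      rfl
    -- expand B * A * B
    have h2 : B * A * B = ∑ α' ∈ S, ∑ β' ∈ T, ∑ α ∈ S, ∑ β ∈ T,
        (c α' β' * c α β) • (adjSub A α β * A * adjSub A α' β') := by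
      rw [hBdef]
      simp only [Matrix.sum_mul, Matrix.mul_sum, Finset.smul_sum, Matrix.smul_mul,
        Matrix.mul_smul, smul_smul]
    rw [h2]
    have h3 : μ₀ ^ (2*k-1) • (∑ α' ∈ S, ∑ β' ∈ T, ∑ α ∈ S, ∑ β ∈ T,
        (c α' β' * c α β) • (adjSub A α β * A * adjSub A α' β'))
        = ∑ α' ∈ S, ∑ β' ∈ T, ∑ α ∈ S, ∑ β ∈ T,
          ((c α β' * (A.submatrix α β').det) * (c α' β * μ₀ ^ (2*k-1))) • adjSub A α' β := by
      simp only [Finset.smul_sum]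
      refine Finset.sum_congr rfl fun α' _ => Finset.sum_congr rfl fun β' _ =>
        Finset.sum_congr rfl fun α _ => Finset.sum_congr rfl fun β _ => ?_
      rw [smul_comm, hP α α' β β', smul_smul]
      congr 1
      rw [hrank1 α' α β' β]
      ring
    rw [h3]
    -- factor the quadruple sum
    have h4 : ∑ α' ∈ S, ∑ β' ∈ T, ∑ α ∈ S, ∑ β ∈ T,
        ((c α β' * (A.submatrix α β').det) * (c α' β * μ₀ ^ (2*k-1))) • adjSub A α' β
        = (∑ β' ∈ T, ∑ α ∈ S, c α β' * (A.submatrix α β').det) •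
            (∑ α' ∈ S, ∑ β ∈ T, (c α' β * μ₀ ^ (2*k-1)) • adjSub A α' β) := by
      rw [Finset.smul_sum]
      refine Finset.sum_congr rfl fun α' _ => ?_
      rw [Finset.sum_smul]
      refine Finset.sum_congr rfl fun β' _ => ?_
      rw [Finset.sum_smul]
      refine Finset.sum_congr rfl fun α _ => ?_
      rw [Finset.smul_sum]
      refine Finset.sum_congr rfl fun β _ => ?_
      rw [smul_smul]
    rw [h4]
    have h5 : ∑ β' ∈ T, ∑ α ∈ S, c α β' * (A.submatrix α β').det = 1 := by
      rw [Finset.sum_comm]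
      exact hc
    rw [h5, one_smul, hBdef, Finset.smul_sum]
    refine Finset.sum_congr rfl fun α' _ => ?_
    rw [Finset.smul_sum]
    refine Finset.sum_congr rfl fun β _ => ?_
    rw [smul_smul, mul_comm]
  -- annihilator / radical argument
  have hZ0 : B * A * B - B = 0 := by
    set Z := B * A * B - B with hZdef
    set J : Ideal R := (Submodule.span R {Z}).annihilator with hJdef
    have hmem : ∀ α₀ ∈ S, ∀ β₀ ∈ T, c α₀ β₀ * (A.submatrix α₀ β₀).det ∈ J.radical := by
      intro α₀ hα₀ β₀ hβ₀
      rw [Ideal.mem_radical_iff]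
      refine ⟨2*k+1, ?_⟩
      rw [hJdef, Submodule.mem_annihilator_span_singleton]
      have h1 : (A.submatrix α₀ β₀).det ^ (2*k-1) • Z = 0 := by
        rw [hZdef, smul_sub, hZ α₀ hα₀ β₀ hβ₀, sub_self]
      have h2 : (A.submatrix α₀ β₀).det ^ (2*k+1) • Z = 0 := by
        rw [show 2*k+1 = (2*k+1 - (2*k-1)) + (2*k-1) from by omega, pow_add, ← smul_smul, h1,
          smul_zero]
      rw [mul_pow, ← smul_smul, h2, smul_zero]
    have hone : (1 : R) ∈ J.radical := by
      rw [← hc]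
      exact Ideal.sum_mem _ fun α hα => Ideal.sum_mem _ fun β hβ => hmem α hα β hβ
    have hJtop : J = ⊤ := Ideal.radical_eq_top.mp ((Ideal.eq_top_iff_one _).mpr hone)
    have h1 : (1:R) ∈ J := hJtop ▸ Submodule.mem_top
    rw [hJdef, Submodule.mem_annihilator_span_singleton] at h1
    simpa using h1
  exact sub_eq_zero.mp hZ0
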